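/- Let G be a finite abelian group with |G| = n. Then ex(n, K^{(r)}_{ℓ₁,…,ℓ_r}) ≥ binom(n, r) · F(G, L^{(r)}_{ℓ₁,…,ℓ_r}) / n. -/

import Mathlib

open Pointwise

/-- `A ⊆ G` is `L^{(r)}_{ℓ₁,…,ℓ_r}`-free. -/
def LFree {G : Type*} [AddCommGroup G] [DecidableEq G] (r : ℕ) (ℓ : Fin r → ℕ)
    (A : Set G) : Prop :=
  ∀ L : Fin r → Finset G, (∀ i, (L i).card = ℓ i) → ¬ ((↑(∑ i, L i) : Set G) ⊆ A)

/-- `F(G, L^{(r)}_{ℓ₁,…,ℓ_r})`. -/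
noncomputable def Fgrp (G : Type*) [AddCommGroup G] [DecidableEq G]
    (r : ℕ) (ℓ : Fin r → ℕ) : ℕ :=
  sSup {k | ∃ A : Finset G, LFree r ℓ (A : Set G) ∧ A.card = k}

/-- An edge set `E` of an `r`-uniform hypergraph on `Fin n` is
`K^{(r)}_{ℓ₁,…,ℓ_r}`-free. -/
def KFree (n r : ℕ) (ℓ : Fin r → ℕ) (E : Finset (Finset (Fin n))) : Prop :=
  ¬ ∃ L : Fin r → Finset (Fin n), (∀ i, (L i).card = ℓ i) ∧
      (∀ i j, i ≠ j → Disjoint (L i) (L j)) ∧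
      ∀ x : Fin r → Fin n, (∀ i, x i ∈ L i) → Finset.image x Finset.univ ∈ E

/-- `ex(n, K^{(r)}_{ℓ₁,…,ℓ_r})`: the maximum number of hyperedges of a
`K^{(r)}_{ℓ₁,…,ℓ_r}`-free `r`-uniform hypergraph on `n` vertices. -/
noncomputable def exK (n r : ℕ) (ℓ : Fin r → ℕ) : ℕ :=
  sSup {k | ∃ E : Finset (Finset (Fin n)),
    (∀ e ∈ E, e.card = r) ∧ KFree n r ℓ E ∧ E.card = k}

/-- Membership in a pointwise sum of finsets over a fintype. -/
lemma mem_finset_fin_sum {G : Type*} [AddCommGroup G] [DecidableEq G] {r : ℕ}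
    (L : Fin r → Finset G) (y : G) :
    y ∈ ∑ i, L i ↔ ∃ x : Fin r → G, (∀ i, x i ∈ L i) ∧ ∑ i, x i = y := by
  rw [← Finset.mem_coe, Finset.coe_sum, Set.mem_fintype_sum]
  constructor
  · rintro ⟨x, hx, h⟩; exact ⟨x, fun i => hx i, h⟩
  · rintro ⟨x, hx, h⟩; exact ⟨x, fun i => hx i, h⟩

/-- Translates of an `LFree` set are `LFree`. -/
lemma lfree_translate {G : Type*} [AddCommGroup G] [DecidableEq G] {r : ℕ} (hr : 0 < r)
    {ℓ : Fin r → ℕ} {A : Finset G} (hA : LFree r ℓ (A : Set G)) (g : G) :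
    LFree r ℓ ((A.image (g + ·)) : Set G) := by
  intro L hL hsub
  set i0 : Fin r := ⟨0, hr⟩ with hi0
  set L' : Fin r → Finset G := fun i => if i = i0 then ((L i).image ((-g) + ·)) else L i with hL'
  refine hA L' (fun i => ?_) ?_
  · by_cases h : i = i0
    · subst h
      have hLi : L' i0 = (L i0).image ((-g) + ·) := by
        show (if i0 = i0 then _ else _) = _; rw [if_pos rfl]
      rw [hLi, Finset.card_image_of_injective _ (add_right_injective (-g)), hL]
    · have hLi : L' i = L i := by
        show (if i = i0 then _ else _) = _; rw [if_neg h]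
      rw [hLi]; exact hL i
  · intro y hy
    rw [Finset.mem_coe, mem_finset_fin_sum] at hy
    obtain ⟨x, hx, hxy⟩ := hy
    have hx0 : x i0 ∈ (L i0).image ((-g) + ·) := by simpa [hL'] using hx i0
    obtain ⟨z, hz, hzx⟩ := Finset.mem_image.mp hx0
    set x' : Fin r → G := Function.update x i0 z with hx'
    have hx'mem : ∀ i, x' i ∈ L i := by
      intro i
      by_cases h : i = i0
      · subst h; simpa [hx'] using hz
      · have := hx i
        simpa [hx', Function.update_of_ne h, hL', h] using this
    have hsum : ∑ i, x' i = g + y := by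
      have h1 : ∑ i, x' i = z + ∑ i ∈ Finset.univ.erase i0, x i := by
        have hz0 : x' i0 = z := Function.update_self _ _ _
        rw [← Finset.add_sum_erase _ x' (Finset.mem_univ i0), hz0]
        congr 1
        exact Finset.sum_congr rfl fun i hi =>
          Function.update_of_ne (Finset.ne_of_mem_erase hi) _ _
      have h2 : ∑ i, x i = (-g + z) + ∑ i ∈ Finset.univ.erase i0, x i := by
        rw [← Finset.add_sum_erase _ x (Finset.mem_univ i0), hzx]
      rw [h1, ← hxy, h2]; abel
    have hgy : g + y ∈ ∑ i, L i := by
      rw [mem_finset_fin_sum]; exact ⟨x', hx'mem, hsum⟩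
    have := hsub (Finset.mem_coe.mpr hgy)
    rw [Finset.mem_coe, Finset.mem_image] at this
    obtain ⟨a, ha, hag⟩ := this
    have hya : y = a := (add_left_cancel hag).symm
    rw [hya]; exact Finset.mem_coe.mpr ha

/-- The hypergraph whose edges are the `r`-sets with element-sum in `B`. -/
def edgeSet {G : Type*} [AddCommGroup G] [Fintype G] [DecidableEq G] (n r : ℕ)
    (e : Fin n ≃ G) (B : Finset G) : Finset (Finset (Fin n)) :=
  (Finset.powersetCard r (Finset.univ : Finset (Fin n))).filter (fun S => ∑ v ∈ S, e v ∈ B)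

lemma kfree_edgeSet {G : Type*} [AddCommGroup G] [Fintype G] [DecidableEq G] {n r : ℕ}
    (e : Fin n ≃ G) {ℓ : Fin r → ℕ} {B : Finset G} (hB : LFree r ℓ (B : Set G)) :
    KFree n r ℓ (edgeSet n r e B) := by
  rintro ⟨L, hLcard, hLdisj, hLedge⟩
  refine hB (fun i => (L i).image e)
    (fun i => by rw [Finset.card_image_of_injective _ e.injective, hLcard]) ?_
  intro y hy
  rw [Finset.mem_coe, mem_finset_fin_sum] at hy
  obtain ⟨x', hx', hx'y⟩ := hy
  set x : Fin r → Fin n := fun i => e.symm (x' i) with hxdef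
  have hex : ∀ i, e (x i) = x' i := fun i => e.apply_symm_apply _
  have hx : ∀ i, x i ∈ L i := by
    intro i
    obtain ⟨v, hv, hvx⟩ := Finset.mem_image.mp (hx' i)
    have hxv : x i = v := by show e.symm (x' i) = v; rw [← hvx, e.symm_apply_apply]
    rwa [hxv]
  have hinj : Function.Injective x := by
    intro i j hij
    by_contra hne
    exact Finset.disjoint_left.mp (hLdisj i j hne) (hx i) (hij ▸ hx j)
  have hedge := hLedge x hx
  rw [edgeSet, Finset.mem_filter] at hedge
  have hσ : ∑ v ∈ Finset.image x Finset.univ, e v = y := by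
    rw [Finset.sum_image (fun i _ j _ h => hinj h), ← hx'y]
    exact Finset.sum_congr rfl fun i _ => hex i
  rw [Finset.mem_coe]
  show y ∈ B
  exact hσ ▸ hedge.2

/-- for a finite abelian group `G` of order `n`,
`ex(n, K^{(r)}_{ℓ₁,…,ℓ_r}) ≥ binom(n, r) · F(G, L^{(r)}_{ℓ₁,…,ℓ_r}) / n`. -/
theorem stmt14 (G : Type*) [AddCommGroup G] [Fintype G] [DecidableEq G]
    (r : ℕ) (hr : 2 ≤ r) (ℓ : Fin r → ℕ) (hℓ : ∀ i, 2 ≤ ℓ i) (hmono : Monotone ℓ)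
    (n : ℕ) (hn : Fintype.card G = n) :
    ((n.choose r : ℝ)) * (Fgrp G r ℓ : ℝ) / (n : ℝ) ≤ (exK n r ℓ : ℝ) := by
  classical
  have hn0 : 0 < n := hn ▸ Fintype.card_pos
  have hrpos : 0 < r := lt_of_lt_of_le two_pos hr
  -- obtain an LFree set of maximum size
  have hmem : Fgrp G r ℓ ∈ {k | ∃ A : Finset G, LFree r ℓ (A : Set G) ∧ A.card = k} := by
    apply Nat.sSup_mem
    · refine ⟨0, (∅ : Finset G), ?_, Finset.card_empty⟩
      intro L hL hsub
      have hne : ∀ i, ∃ v, v ∈ L i := fun i =>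
        Finset.card_pos.mp (by rw [hL i]; exact lt_of_lt_of_le Nat.zero_lt_two (hℓ i))
      choose v hv using hne
      have : ∑ i, v i ∈ ∑ i, L i := (mem_finset_fin_sum L _).mpr ⟨v, hv, rfl⟩
      simpa using hsub (Finset.mem_coe.mpr this)
    · exact ⟨Fintype.card G, fun k ⟨A, _, hA⟩ => hA ▸ Finset.card_le_univ A⟩
  obtain ⟨A, hAfree, hAcard⟩ := hmem
  set m := Fgrp G r ℓ
  let e : Fin n ≃ G := (Fintype.equivFinOfCardEq hn).symm
  let T : Finset (Finset (Fin n)) := Finset.powersetCard r Finset.univ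
  have hTcard : T.card = n.choose r := by
    rw [Finset.card_powersetCard, Finset.card_univ, Fintype.card_fin]
  -- counting
  have hcount : ∑ g : G, (edgeSet n r e (A.image (g + ·))).card = n.choose r * m := by
    have h1 : ∀ g : G, (edgeSet n r e (A.image (g + ·))).card
        = ∑ S ∈ T, if (∑ v ∈ S, e v) ∈ A.image (g + ·) then 1 else 0 := by
      intro g; rw [edgeSet, Finset.card_filter]
    simp_rw [h1]
    rw [Finset.sum_comm]
    have h2 : ∀ S ∈ T, (∑ g : G, if (∑ v ∈ S, e v) ∈ A.image (g + ·) then 1 else 0) = m := by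
      intro S _
      rw [← Finset.card_filter]
      have himg : (Finset.univ.filter fun g : G => (∑ v ∈ S, e v) ∈ A.image (g + ·))
          = A.image (fun a => (∑ v ∈ S, e v) - a) := by
        ext g
        simp only [Finset.mem_filter, Finset.mem_univ, true_and, Finset.mem_image]
        constructor
        · rintro ⟨a, ha, hag⟩
          exact ⟨a, ha, by rw [← hag]; abel⟩
        · rintro ⟨a, ha, hag⟩
          exact ⟨a, ha, by rw [← hag]; abel⟩
      rw [himg, Finset.card_image_of_injective _ (fun a b hab => by
        have : (∑ v ∈ S, e v) - ((∑ v ∈ S, e v) - a) = (∑ v ∈ S, e v) - ((∑ v ∈ S, e v) - b) := by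
          rw [hab]
        simpa using this), hAcard]
    rw [Finset.sum_congr rfl h2, Finset.sum_const, hTcard, smul_eq_mul]
  -- pigeonhole
  have hpig : ∃ g : G, n.choose r * m ≤ n * (edgeSet n r e (A.image (g + ·))).card := by
    by_contra h
    push_neg at h
    have hGne : (Finset.univ : Finset G).Nonempty := Finset.univ_nonempty
    have hlt : ∑ g : G, n * (edgeSet n r e (A.image (g + ·))).card
        < ∑ _g : G, n.choose r * m :=
      Finset.sum_lt_sum_of_nonempty hGne (fun g _ => h g)
    rw [← Finset.mul_sum, hcount, Finset.sum_const, Finset.card_univ, hn, smul_eq_mul] at hlt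
    exact lt_irrefl _ hlt
  obtain ⟨g, hg⟩ := hpig
  -- the edge set witnesses a lower bound for exK
  have hle : (edgeSet n r e (A.image (g + ·))).card ≤ exK n r ℓ := by
    apply le_csSup
    · exact ⟨Fintype.card (Finset (Fin n)), fun k ⟨E, _, _, hE⟩ => hE ▸ Finset.card_le_univ E⟩
    · refine ⟨edgeSet n r e (A.image (g + ·)), ?_, ?_, rfl⟩
      · intro S hS
        rw [edgeSet, Finset.mem_filter] at hS
        exact (Finset.mem_powersetCard.mp hS.1).2
      · exact kfree_edgeSet e (lfree_translate hrpos hAfree g)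
  have hfinal : (n.choose r * m : ℕ) ≤ n * exK n r ℓ :=
    hg.trans (Nat.mul_le_mul_left n hle)
  rw [div_le_iff₀ (by exact_mod_cast hn0)]
  calc ((n.choose r : ℝ)) * (m : ℝ) = ((n.choose r * m : ℕ) : ℝ) := by push_cast; ring
    _ ≤ ((n * exK n r ℓ : ℕ) : ℝ) := by exact_mod_cast hfinal
    _ = (exK n r ℓ : ℝ) * (n : ℝ) := by push_cast; ring
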